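/- The function t ↦ 1 / Real.logb 2 (t + 1) is convex on the open interval Set.Ioi (0 : ℝ), i.e. ConvexOn ℝ (Set.Ioi 0) (fun t => (Real.logb 2 (t + 1))⁻¹). -/

import Mathlib

open Set Real

private lemma logb2_concave : ConcaveOn ℝ (Ioi (0:ℝ)) (fun t => Real.logb 2 (t + 1)) := by
  have hlog : ConcaveOn ℝ (Ioi (0:ℝ)) (fun t : ℝ => Real.log (t + 1)) := by
    have := (strictConcaveOn_log_Ioi.concaveOn).comp_affineMap
      (AffineMap.id ℝ ℝ + AffineMap.const ℝ ℝ (1:ℝ))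
    refine (this.subset ?_ (convex_Ioi 0))
    intro x hx
    simp only [Set.mem_preimage, AffineMap.coe_add, AffineMap.coe_id, AffineMap.coe_const,
      Pi.add_apply, Function.const_apply, id_eq, Set.mem_Ioi] at *
    linarith
  have h := hlog.smul (c := (Real.log 2)⁻¹) (by positivity)
  convert h using 2 with t
  · rfl
  · rfl
  simp [Real.logb, div_eq_inv_mul]

private lemma image_logb2 : (fun t : ℝ => Real.logb 2 (t + 1)) '' Ioi (0:ℝ) = Ioi (0:ℝ) := by
  ext y
  constructor
  · rintro ⟨t, ht, rfl⟩
    exact Real.logb_pos (by norm_num) (by simp at ht; linarith)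
  · intro hy
    refine ⟨(2:ℝ) ^ y - 1, ?_, ?_⟩
    · have : (1:ℝ) < (2:ℝ) ^ y := Real.one_lt_rpow_iff_of_pos (by norm_num) |>.2 (Or.inl ⟨by norm_num, hy⟩)
      simpa using by linarith
    · show Real.logb 2 (2 ^ y - 1 + 1) = y
      rw [sub_add_cancel]
      exact Real.logb_rpow (by norm_num) (by norm_num)

/-- The logarithmic DCG discount `t ↦ 1/log₂(t+1)` is convex on `(0, ∞)`. -/
theorem dcg_discount_convex :
    ConvexOn ℝ (Set.Ioi (0 : ℝ)) (fun t => (Real.logb 2 (t + 1))⁻¹) := by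
  have hinv : ConvexOn ℝ (Ioi (0:ℝ)) (fun x : ℝ => x⁻¹) := by
    have := strictConvexOn_zpow (m := -1) (by norm_num) (by norm_num)
    simpa using this.convexOn
  have hanti : AntitoneOn (fun x : ℝ => x⁻¹) (Ioi (0:ℝ)) := fun a ha b hb hab =>
    inv_anti₀ ha hab
  have := (hinv.subset image_logb2.le (by
      rw [image_logb2]; exact convex_Ioi 0)).comp_concaveOn logb2_concave
      (hanti.mono image_logb2.le)
  · exact this
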